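/- Let a < b be real numbers, 1 < α < 2, and let y : [a,b] → ℝ be continuous. Suppose u : [a,b] → ℝ is continuously differentiable with u' absolutely continuous on [a,b], u(a) = u(b) = 0, u twice differentiable on (a,b), and (t−a)^{2−α}·u''(t) + y(t) = 0 for all t ∈ (a,b). Then for every t ∈ [a,b], u(t) = −∫_a^t (t−s)·(s−a)^{α−2}·y(s) ds + ((t−a)/(b−a))·∫_a^b (b−s)·(s−a)^{α−2}·y(s) ds, i.e. u(t) = ∫_a^b G(t,s)·y(s)·(s−a)^{α−2} ds with G the Green function G(t,s) = (1/(b−a))·(−(b−a)(t−s) + (b−s)(t−a)) for a ≤ s ≤ t ≤ b and G(t,s) = (1/(b−a))·(b−s)(t−a) for a ≤ t < s ≤ b. In particular the boundary value problem T_α^a u + y = 0, u(a) = u(b) = 0 has a unique solution in this class. -/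

import Mathlib

open Set Filter Topology MeasureTheory intervalIntegral

/-- Uniqueness of the solution of the linear conformable Dirichlet problem: any
solution `u ∈ AC²[a,b]` (i.e. `u` is `C¹` with `u'` absolutely continuous, encoded
via the fundamental theorem of calculus for `u''`) of
`(t-a)^(2-α) u''(t) + y(t) = 0`, `u(a) = u(b) = 0` is given by the Green-function
formula. -/
theorem linear_problem_unique_solution
    (a b α : ℝ) (hab : a < b) (hα1 : 1 < α) (hα2 : α < 2)
    (y u u' u'' : ℝ → ℝ)
    (hy : ContinuousOn y (Set.Icc a b))
    (hu' : ∀ t ∈ Set.Icc a b, HasDerivWithinAt u (u' t) (Set.Icc a b) t)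
    (hu'cont : ContinuousOn u' (Set.Icc a b))
    (hint : IntervalIntegrable u'' volume a b)
    (hFTC : ∀ c ∈ Set.Icc a b, ∀ d ∈ Set.Icc a b, u' d - u' c = ∫ s in c..d, u'' s)
    (hu'' : ∀ t ∈ Set.Ioo a b, HasDerivAt u' (u'' t) t)
    (ha : u a = 0) (hb : u b = 0)
    (heq : ∀ t ∈ Set.Ioo a b, (t - a) ^ (2 - α) * u'' t + y t = 0) :
    ∀ t ∈ Set.Icc a b,
      u t = -(∫ s in a..t, (t - s) * (s - a) ^ (α - 2) * y s)
        + ((t - a) / (b - a)) * ∫ s in a..b, (b - s) * (s - a) ^ (α - 2) * y s := by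
  have hucont : ContinuousOn u (Set.Icc a b) :=
    fun t ht => (hu' t ht).continuousWithinAt
  have hya : ∀ s ∈ Set.Ioo a b, u'' s = -((s - a) ^ (α - 2) * y s) := by
    intro s hs
    have h1 := heq s hs
    have hsa : (0:ℝ) < s - a := by linarith [hs.1]
    have h2 : (s - a) ^ (α - 2) * (s - a) ^ (2 - α) = 1 := by
      rw [← Real.rpow_add hsa]; norm_num
    have h3 : (s - a) ^ (2 - α) * u'' s = -y s := by linarith
    calc u'' s = ((s - a) ^ (α - 2) * (s - a) ^ (2 - α)) * u'' s := by rw [h2]; ring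
    _ = (s - a) ^ (α - 2) * ((s - a) ^ (2 - α) * u'' s) := by ring
    _ = -((s - a) ^ (α - 2) * y s) := by rw [h3]; ring
  -- Taylor representation
  have key : ∀ t ∈ Set.Icc a b,
      u t = u a + (t - a) * u' a + ∫ s in a..t, (t - s) * u'' s := by
    intro t ht
    have hat : a ≤ t := ht.1
    have hIcc : Set.Icc a t ⊆ Set.Icc a b := Set.Icc_subset_Icc le_rfl ht.2
    have hgc : ContinuousOn (fun s => (t - s) * u' s + u s) (Set.Icc a t) := by
      exact (((continuousOn_const.sub continuousOn_id).mul (hu'cont.mono hIcc)).add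
        (hucont.mono hIcc))
    have hgd : ∀ s ∈ Set.Ioo a t, HasDerivAt (fun s => (t - s) * u' s + u s)
        ((t - s) * u'' s) s := by
      intro s hs
      have hs' : s ∈ Set.Ioo a b := ⟨hs.1, lt_of_lt_of_le hs.2 ht.2⟩
      have husd : HasDerivAt u (u' s) s :=
        (hu' s (Set.Ioo_subset_Icc_self hs')).hasDerivAt (Icc_mem_nhds hs'.1 hs'.2)
      have h2 := hu'' s hs'
      have h3 : HasDerivAt (fun s => (t - s) * u' s)
          (-1 * u' s + (t - s) * u'' s) s := by
        have hts : HasDerivAt (fun s : ℝ => t - s) (-1) s := by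
          simpa using (hasDerivAt_id s).const_sub t
        exact hts.mul h2
      have := h3.add husd
      rw [show (t - s) * u'' s = -1 * u' s + (t - s) * u'' s + u' s by ring]; exact this
    have hint' : IntervalIntegrable (fun s => (t - s) * u'' s) volume a t := by
      apply IntervalIntegrable.continuousOn_mul
      · exact hint.mono_set (by rw [Set.uIcc_of_le hat, Set.uIcc_of_le hab.le]; exact hIcc)
      · exact (continuousOn_const.sub continuousOn_id).mono (by rw [Set.uIcc_of_le hat])
    have hFTC2 := intervalIntegral.integral_eq_sub_of_hasDeriv_right_of_le hat hgc
      (fun s hs => (hgd s hs).hasDerivWithinAt) hint'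
    simp only [sub_self, zero_mul, zero_add] at hFTC2
    linarith [hFTC2]
  -- rewrite the integral
  have hsub : ∀ t ∈ Set.Icc a b, ∀ c : ℝ, (∫ s in a..t, (c - s) * u'' s)
      = -∫ s in a..t, (c - s) * (s - a) ^ (α - 2) * y s := by
    intro t ht c
    rw [← intervalIntegral.integral_neg]
    apply intervalIntegral.integral_congr_ae
    have hb0 : (volume : Measure ℝ) {b} = 0 := measure_singleton b
    filter_upwards [compl_mem_ae_iff.mpr hb0] with s hs hst
    rw [Set.uIoc_of_le ht.1] at hst
    have hsb : s < b := lt_of_le_of_ne (hst.2.trans ht.2) hs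
    rw [hya s ⟨hst.1, hsb⟩]; ring
  have hkb := key b ⟨hab.le, le_rfl⟩
  rw [hb, ha, hsub b ⟨hab.le, le_rfl⟩ b] at hkb
  -- solve for u' a
  have hba : b - a ≠ 0 := by linarith
  have hu'a : u' a = (∫ s in a..b, (b - s) * (s - a) ^ (α - 2) * y s) / (b - a) := by
    field_simp
    linarith
  intro t ht
  rw [key t ht, ha, hsub t ht t, hu'a]
  field_simp
  ring
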